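/- arXiv:2105.08850 — 6 statements merged into one kernel-verified Lean document; each statement's English description precedes it below -/
import Mathlib

section
/- In any graph G with no clique of size t (t ≥ 2) on n vertices, the probability that two vertices chosen independently and uniformly at random form an independent set (i.e., are not adjacent) is at least 1/(t-1). -/
open Finset SimpleGraph

private lemma nonadj_card_eq {V : Type*} [Fintype V] (K : SimpleGraph V)
    [DecidableRel K.Adj] :
    Nat.card {p : V × V // ¬ K.Adj p.1 p.2} + 2 * #K.edgeFinset =
      (Fintype.card V) ^ 2 := by
  classical
  rw [Nat.card_eq_fintype_card, Fintype.card_subtype, K.two_mul_card_edgeFinset]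
  have he : (univ.filter fun (x, y) => K.Adj x y) =
      univ.filter (fun (p : V × V) => K.Adj p.1 p.2) :=
    Finset.filter_congr (fun p _ => by cases p; rfl)
  have h := Finset.card_filter_add_card_filter_not
    (s := (univ : Finset (V × V))) (p := fun p => ¬ K.Adj p.1 p.2)
  simp only [not_not] at h
  rw [Finset.card_univ, Fintype.card_prod, ← sq] at h
  rw [he]
  exact h

/-- In any graph `G` with no clique of size `t` (`t ≥ 2`) on a nonempty finite vertex set,
the probability that two vertices chosen independently and uniformly at random form an
independent set (i.e., are not adjacent) is at least `1/(t-1)`. -/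
theorem stmt_0 {V : Type*} [Fintype V] [Nonempty V] (G : SimpleGraph V)
    (t : ℕ) (ht : 2 ≤ t) (hG : G.CliqueFree t) :
    (1 : ℝ) / ((t : ℝ) - 1) ≤
      (Nat.card {p : V × V // ¬ G.Adj p.1 p.2} : ℝ) / (Nat.card V : ℝ) ^ 2 := by
  classical
  set n := Fintype.card V with hn
  set r := t - 1 with hrdef
  have hr : 0 < r := by omega
  have htr : t = r + 1 := by omega
  obtain ⟨H, _, hH⟩ := exists_isTuranMaximal (V := V) hr
  have hGH : #G.edgeFinset ≤ #H.edgeFinset := hH.2 (G' := G) (htr ▸ hG)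
  set fp := hH.finpartition with hfp
  -- count non-adjacent pairs of H via the partition
  have hcount : Nat.card {p : V × V // ¬ H.Adj p.1 p.2} =
      ∑ P ∈ fp.parts, (#P) ^ 2 := by
    rw [Nat.card_eq_fintype_card, Fintype.card_subtype]
    have h1 : #(univ.filter fun (p : V × V) => ¬ H.Adj p.1 p.2) =
        ∑ v : V, #(univ.filter fun w => ¬ H.Adj v w) := by
      simp only [Finset.card_filter]
      rw [Fintype.sum_prod_type]
    rw [h1]
    have h2 : ∀ v : V, (univ.filter fun w => ¬ H.Adj v w) = fp.part v := by
      intro v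
      ext w
      simp only [mem_filter, mem_univ, true_and]
      rw [hH.not_adj_iff_part_eq,
        fp.mem_part_iff_part_eq_part (mem_univ w) (mem_univ v), eq_comm]
    simp only [h2]
    have h3 : ∑ v ∈ fp.parts.biUnion id, #(fp.part v) = ∑ P ∈ fp.parts, (#P) ^ 2 := by
      rw [Finset.sum_biUnion (fun P hP Q hQ hPQ => fp.disjoint hP hQ hPQ)]
      refine Finset.sum_congr rfl fun P hP => ?_
      rw [Finset.sum_congr rfl (fun v hv => by rw [fp.part_eq_of_mem hP hv]),
        Finset.sum_const, smul_eq_mul, sq, id_eq]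
    rw [← h3]
    exact Finset.sum_congr fp.biUnion_parts.symm (fun _ _ => rfl)
  -- key inequality
  have hkey : n ^ 2 ≤ r * Nat.card {p : V × V // ¬ H.Adj p.1 p.2} := by
    rw [hcount]
    calc n ^ 2 = (∑ P ∈ fp.parts, #P) ^ 2 := by rw [fp.sum_card_parts, card_univ]
      _ ≤ #fp.parts * ∑ P ∈ fp.parts, (#P) ^ 2 := sq_sum_le_card_mul_sum_sq
      _ ≤ r * ∑ P ∈ fp.parts, (#P) ^ 2 :=
          Nat.mul_le_mul_right _ hH.card_parts_le
  have e1 := nonadj_card_eq G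
  have e2 := nonadj_card_eq H
  have hkeyG : n ^ 2 ≤ r * Nat.card {p : V × V // ¬ G.Adj p.1 p.2} := by
    have : Nat.card {p : V × V // ¬ H.Adj p.1 p.2} ≤
        Nat.card {p : V × V // ¬ G.Adj p.1 p.2} := by omega
    exact hkey.trans (Nat.mul_le_mul_left _ this)
  -- conclude over ℝ
  have hn0 : 0 < n := Fintype.card_pos
  have hcast : ((t : ℝ) - 1) = (r : ℝ) := by
    rw [hrdef, Nat.cast_sub (by omega), Nat.cast_one]
  rw [hcast, Nat.card_eq_fintype_card (α := V), ← hn,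
    div_le_div_iff₀ (by exact_mod_cast hr) (by positivity), one_mul]
  calc ((n : ℝ)) ^ 2 = ((n ^ 2 : ℕ) : ℝ) := by push_cast; ring
    _ ≤ ((r * Nat.card {p : V × V // ¬ G.Adj p.1 p.2} : ℕ) : ℝ) := by
        exact_mod_cast hkeyG
    _ = (Nat.card {p : V × V // ¬ G.Adj p.1 p.2} : ℝ) * r := by push_cast; ring
end

section
/- In any triangle-free graph G, the probability that three vertices chosen independently and uniformly at random form an independent set is at least 1/4. -/
open Finset

/-- In any triangle-free graph `G` on a nonempty finite vertex set, the probability that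
three vertices chosen independently and uniformly at random form an independent set is
at least `1/4`. -/
theorem stmt_2 {V : Type*} [Fintype V] [Nonempty V] (G : SimpleGraph V)
    (hG : G.CliqueFree 3) :
    (1 : ℝ) / 4 ≤
      (Nat.card {f : Fin 3 → V // ∀ i j, ¬ G.Adj (f i) (f j)} : ℝ) /
        (Nat.card V : ℝ) ^ 3 := by
  classical
  set χ : V → V → ℝ := fun u v => if G.Adj u v then 1 else 0 with hχ
  have hχsymm : ∀ u v, χ u v = χ v u := by
    intro u v; simp [hχ, G.adj_comm]
  have tri : ∀ a b c, χ a b * χ a c * χ b c = 0 := by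
    intro a b c
    by_cases hab : G.Adj a b
    · by_cases hac : G.Adj a c
      · by_cases hbc : G.Adj b c
        · exact absurd (SimpleGraph.is3Clique_iff.mpr ⟨a, b, c, hab, hac, hbc, rfl⟩) (hG _)
        · simp [hχ, hbc]
      · simp [hχ, hac]
    · simp [hχ, hab]
  set Q : V × V × V → Prop :=
    fun p => ¬ G.Adj p.1 p.2.1 ∧ ¬ G.Adj p.1 p.2.2 ∧ ¬ G.Adj p.2.1 p.2.2 with hQ
  have e : {f : Fin 3 → V // ∀ i j, ¬ G.Adj (f i) (f j)} ≃ {p : V × V × V // Q p} :=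
    { toFun := fun f => ⟨(f.1 0, f.1 1, f.1 2), ⟨f.2 0 1, f.2 0 2, f.2 1 2⟩⟩
      invFun := fun p => ⟨![p.1.1, p.1.2.1, p.1.2.2], by
        intro i j
        have h1 := p.2.1
        have h2 := p.2.2.1
        have h3 := p.2.2.2
        fin_cases i <;> fin_cases j <;>
          simp_all [G.adj_comm, SimpleGraph.irrefl]⟩
      left_inv := by
        rintro ⟨f, hf⟩
        ext i
        fin_cases i <;> rfl
      right_inv := by rintro ⟨⟨a, b, c⟩, h⟩; rfl }
  have hcard : (Nat.card {f : Fin 3 → V // ∀ i j, ¬ G.Adj (f i) (f j)} : ℝ)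
      = ∑ a : V, ∑ b : V, ∑ c : V, (1 - χ a b) * (1 - χ a c) * (1 - χ b c) := by
    rw [Nat.card_congr e, Nat.card_eq_fintype_card, Fintype.card_subtype]
    rw [← Finset.sum_boole]
    rw [Fintype.sum_prod_type]
    push_cast
    refine Finset.sum_congr rfl fun a _ => ?_
    rw [Fintype.sum_prod_type]
    refine Finset.sum_congr rfl fun b _ => Finset.sum_congr rfl fun c _ => ?_
    by_cases hab : G.Adj a b <;> by_cases hac : G.Adj a c <;> by_cases hbc : G.Adj b c <;>
      simp [hQ, hχ, hab, hac, hbc]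
  set d : V → ℝ := fun a => ∑ b : V, χ a b with hd
  set S : ℝ := ∑ a : V, d a with hS
  set T : ℝ := ∑ a : V, d a ^ 2 with hT
  set n : ℝ := (Fintype.card V : ℝ) with hnn
  have hn1 : (1 : ℝ) ≤ n := by
    rw [hnn]; exact_mod_cast Fintype.card_pos
  have expand : ∀ a b c : V, (1 - χ a b) * (1 - χ a c) * (1 - χ b c)
      = 1 - χ a b - χ a c - χ b c + χ a b * χ a c + χ a b * χ b c + χ a c * χ b c := by
    intro a b c
    linear_combination - tri a b c
  have e1 : ∑ a : V, ∑ b : V, ∑ c : V, χ a b = n * S := by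
    rw [Finset.mul_sum]
    refine Finset.sum_congr rfl fun a _ => ?_
    rw [hd, Finset.mul_sum]
    refine Finset.sum_congr rfl fun b _ => ?_
    rw [Finset.sum_const, Finset.card_univ, nsmul_eq_mul, hnn]
  have e2 : ∑ a : V, ∑ b : V, ∑ c : V, χ a c = n * S := by
    rw [Finset.mul_sum]
    refine Finset.sum_congr rfl fun a _ => ?_
    simp [hd, hnn, mul_comm]
  have e3 : ∑ a : V, ∑ b : V, ∑ c : V, χ b c = n * S := by
    have h : ∀ a : V, ∑ b : V, ∑ c : V, χ b c = S := fun a => rfl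
    simp only [h, Finset.sum_const, Finset.card_univ, nsmul_eq_mul, hnn]
    rfl
  have e4 : ∑ a : V, ∑ b : V, ∑ c : V, χ a b * χ a c = T := by
    refine Finset.sum_congr rfl fun a _ => ?_
    rw [sq, Finset.sum_mul_sum]
  have e5 : ∑ a : V, ∑ b : V, ∑ c : V, χ a b * χ b c = T := by
    rw [Finset.sum_comm]
    refine Finset.sum_congr rfl fun b _ => ?_
    rw [sq, ← Finset.sum_mul_sum]
    congr 1
    exact Finset.sum_congr rfl fun a _ => hχsymm a b
  have e6 : ∑ a : V, ∑ b : V, ∑ c : V, χ a c * χ b c = T := by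
    have h1 : ∀ a : V, ∑ b : V, ∑ c : V, χ a c * χ b c = ∑ c : V, χ a c * d c := by
      intro a
      rw [Finset.sum_comm]
      refine Finset.sum_congr rfl fun c _ => ?_
      rw [← Finset.mul_sum]
      congr 1
      exact Finset.sum_congr rfl fun b _ => hχsymm b c
    simp only [h1]
    rw [Finset.sum_comm]
    refine Finset.sum_congr rfl fun c _ => ?_
    rw [← Finset.sum_mul, sq]
    congr 1
    exact Finset.sum_congr rfl fun a _ => hχsymm a c
  have total : ∑ a : V, ∑ b : V, ∑ c : V, (1 - χ a b) * (1 - χ a c) * (1 - χ b c)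
      = n ^ 3 - 3 * (n * S) + 3 * T := by
    simp only [expand, Finset.sum_add_distrib, Finset.sum_sub_distrib]
    rw [e1, e2, e3, e4, e5, e6]
    simp only [Finset.sum_const, Finset.card_univ, nsmul_eq_mul, mul_one]
    rw [← hnn]
    ring
  have cauchy : S ^ 2 ≤ n * T := by
    have h := Finset.sum_mul_sq_le_sq_mul_sq Finset.univ (fun _ : V => (1 : ℝ)) d
    simpa [hS, hT, hnn, Finset.card_univ] using h
  have hS0 : 0 ≤ S := by
    refine Finset.sum_nonneg fun a _ => Finset.sum_nonneg fun b _ => ?_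
    simp only [hχ]
    split_ifs <;> norm_num
  have hden : (Nat.card V : ℝ) = n := by rw [hnn, Nat.card_eq_fintype_card]
  rw [hcard, total, hden, le_div_iff₀ (by positivity)]
  nlinarith [sq_nonneg (2 * S - n ^ 2), cauchy, hn1, hS0, sq_nonneg n]
end

section
/- For the complete graph K_2, three independently uniformly random vertices form an independent set with probability exactly 1/4, and K_2 is triangle-free; hence the infimum over triangle-free graphs of this probability equals 1/4. -/
open Finset

def tripleEquiv (V : Type) : (Fin 3 → V) ≃ V × V × V where
  toFun f := (f 0, f 1, f 2)
  invFun t := ![t.1, t.2.1, t.2.2]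
  left_inv f := by ext i; fin_cases i <;> rfl
  right_inv t := rfl

lemma lower_bound (V : Type) [Fintype V] [Nonempty V] (G : SimpleGraph V)
    (hG : G.CliqueFree 3) :
    (1:ℝ)/4 ≤ (Nat.card {f : Fin 3 → V // ∀ i j, ¬ G.Adj (f i) (f j)} : ℝ) /
      (Nat.card V : ℝ) ^ 3 := by
  classical
  set n : ℝ := (Fintype.card V : ℝ) with hn'
  have hn1 : (1:ℝ) ≤ n := by
    rw [hn']; exact_mod_cast Fintype.card_pos (α := V)
  set a : V → V → ℝ := fun x y => if G.Adj x y then 1 else 0 with ha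
  set d : V → ℝ := fun x => ∑ y, a x y with hd
  set A : ℝ := ∑ x, d x with hA
  set D : ℝ := ∑ x, (d x)^2 with hD
  have hsymm : ∀ x y, a x y = a y x := by
    intro x y; simp [ha, SimpleGraph.adj_comm]
  have hcard : (Nat.card {f : Fin 3 → V // ∀ i j, ¬ G.Adj (f i) (f j)} : ℝ) =
      ∑ x : V, ∑ y : V, ∑ z : V, (1 - a x y) * (1 - a x z) * (1 - a y z) := by
    rw [Nat.card_eq_fintype_card, Fintype.card_subtype, Finset.card_filter]
    push_cast
    rw [Fintype.sum_equiv (tripleEquiv V)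
        (fun f => if ∀ i j, ¬ G.Adj (f i) (f j) then (1:ℝ) else 0)
        (fun t => (1 - a t.1 t.2.1) * (1 - a t.1 t.2.2) * (1 - a t.2.1 t.2.2))]
    · rw [Fintype.sum_prod_type]
      exact Finset.sum_congr rfl fun x _ => by rw [Fintype.sum_prod_type]
    · intro f
      have hiff : (∀ i j, ¬ G.Adj (f i) (f j)) ↔
          (¬ G.Adj (f 0) (f 1) ∧ ¬ G.Adj (f 0) (f 2) ∧ ¬ G.Adj (f 1) (f 2)) := by
        constructor
        · intro h; exact ⟨h 0 1, h 0 2, h 1 2⟩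
        · rintro ⟨h01, h02, h12⟩ i j
          fin_cases i <;> fin_cases j <;> intro h <;>
            first
              | exact G.irrefl h
              | exact h01 h | exact h01 h.symm
              | exact h02 h | exact h02 h.symm
              | exact h12 h | exact h12 h.symm
      simp only [tripleEquiv, Equiv.coe_fn_mk]
      change (if ∀ i j, ¬ G.Adj (f i) (f j) then (1:ℝ) else 0) =
        (1 - a (f 0) (f 1)) * (1 - a (f 0) (f 2)) * (1 - a (f 1) (f 2))
      rw [if_congr hiff rfl rfl]
      by_cases h1 : G.Adj (f 0) (f 1) <;> by_cases h2 : G.Adj (f 0) (f 2) <;>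
        by_cases h3 : G.Adj (f 1) (f 2) <;> simp [ha, h1, h2, h3]
  have htri : ∀ x y z : V, a x y * a x z * a y z = 0 := by
    intro x y z
    by_cases h1 : G.Adj x y
    · by_cases h2 : G.Adj x z
      · by_cases h3 : G.Adj y z
        · exact absurd (SimpleGraph.is3Clique_triple_iff.2 ⟨h1, h2, h3⟩) (hG {x, y, z})
        · simp [ha, h3]
      · simp [ha, h2]
    · simp [ha, h1]
  have hexp : ∑ x : V, ∑ y : V, ∑ z : V, (1 - a x y) * (1 - a x z) * (1 - a y z)
      = n^3 - 3*n*A + 3*D := by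
    have point : ∀ x y z : V, (1 - a x y) * (1 - a x z) * (1 - a y z)
        = 1 - a x y - a x z - a y z + a x y * a x z + a x y * a y z + a x z * a y z
          - a x y * a x z * a y z := by intro x y z; ring
    simp only [point, htri, sub_zero]
    simp only [Finset.sum_add_distrib, Finset.sum_sub_distrib]
    have c1 : ∑ _x : V, ∑ _y : V, ∑ _z : V, (1:ℝ) = n^3 := by
      simp [Finset.sum_const, card_univ, hn']; ring
    have c2 : ∑ x : V, ∑ y : V, ∑ _z : V, a x y = n * A := by
      simp only [hA, hd, Finset.sum_const, card_univ, nsmul_eq_mul, Finset.mul_sum, hn']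
    have c3 : ∑ x : V, ∑ _y : V, ∑ z : V, a x z = n * A := by
      simp only [hA, hd, Finset.sum_const, card_univ, nsmul_eq_mul,
        ← Finset.mul_sum, hn']
    have c4 : ∑ _x : V, ∑ y : V, ∑ z : V, a y z = n * A := by
      simp only [hA, hd, Finset.sum_const, card_univ, nsmul_eq_mul, hn']
    have c5 : ∑ x : V, ∑ y : V, ∑ z : V, a x y * a x z = D := by
      rw [hD]
      refine Finset.sum_congr rfl fun x _ => ?_
      rw [sq, hd, Finset.sum_mul_sum]
    have csum : ∀ y : V, (∑ x : V, a x y) = d y := by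
      intro y; rw [hd]; exact Finset.sum_congr rfl fun x _ => hsymm x y
    have c6 : ∑ x : V, ∑ y : V, ∑ z : V, a x y * a y z = D := by
      rw [Finset.sum_comm, hD]
      refine Finset.sum_congr rfl fun y _ => ?_
      calc ∑ x : V, ∑ z : V, a x y * a y z
          = ∑ x : V, a x y * d y :=
            Finset.sum_congr rfl fun x _ => by rw [← Finset.mul_sum]
        _ = (∑ x : V, a x y) * d y := by rw [← Finset.sum_mul]
        _ = d y ^ 2 := by rw [csum y, sq]
    have c7 : ∑ x : V, ∑ y : V, ∑ z : V, a x z * a y z = D := by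
      have step : ∀ x : V, ∑ y : V, ∑ z : V, a x z * a y z
          = ∑ z : V, a x z * d z := by
        intro x
        rw [Finset.sum_comm]
        refine Finset.sum_congr rfl fun z _ => ?_
        rw [← csum z, Finset.mul_sum]
      simp only [step]
      rw [Finset.sum_comm, hD]
      refine Finset.sum_congr rfl fun z _ => ?_
      rw [sq, ← csum z, Finset.sum_mul]
    rw [c1, c2, c3, c4, c5, c6, c7]; ring
  have hCS : A^2 ≤ n * D := by
    have h := sq_sum_le_card_mul_sum_sq (s := (univ : Finset V)) (f := d)
    rw [card_univ] at h
    calc A^2 = (∑ x, d x)^2 := by rw [hA]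
      _ ≤ (Fintype.card V : ℝ) * ∑ x, (d x)^2 := by exact_mod_cast h
      _ = n * D := by rw [hn', hD]
  have hg : (Nat.card {f : Fin 3 → V // ∀ i j, ¬ G.Adj (f i) (f j)} : ℝ)
      = n^3 - 3*n*A + 3*D := hcard.trans hexp
  have hn0 : (0:ℝ) < n := lt_of_lt_of_le one_pos hn1
  have hnn : ((Nat.card V : ℝ)) = n := by
    rw [Nat.card_eq_fintype_card, hn']
  rw [hnn, hg, le_div_iff₀ (by positivity)]
  nlinarith [hCS, sq_nonneg (n^2 - 2*A), hn0, mul_pos hn0 hn0, sq_nonneg (n*(n^2-2*A))]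

/-- For the complete graph `K_2`, three independently uniformly random vertices form an
independent set with probability exactly `1/4`, and `K_2` is triangle-free; hence the
infimum over (nonempty finite) triangle-free graphs of this probability equals `1/4`. -/
theorem stmt_3 :
    (Nat.card {f : Fin 3 → Fin 2 //
        ∀ i j, ¬ (⊤ : SimpleGraph (Fin 2)).Adj (f i) (f j)} : ℝ) / (2 : ℝ) ^ 3 = 1 / 4
    ∧ (⊤ : SimpleGraph (Fin 2)).CliqueFree 3
    ∧ sInf {p : ℝ | ∃ (V : Type) (_ : Fintype V) (_ : Nonempty V) (G : SimpleGraph V),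
        G.CliqueFree 3 ∧
        p = (Nat.card {f : Fin 3 → V // ∀ i j, ¬ G.Adj (f i) (f j)} : ℝ) /
              (Nat.card V : ℝ) ^ 3} = 1 / 4 := by
  have h2 : Nat.card {f : Fin 3 → Fin 2 //
      ∀ i j, ¬ (⊤ : SimpleGraph (Fin 2)).Adj (f i) (f j)} = 2 := by
    simp only [Nat.card_eq_fintype_card, SimpleGraph.top_adj]
    decide
  have hfree : (⊤ : SimpleGraph (Fin 2)).CliqueFree 3 :=
    SimpleGraph.cliqueFree_of_card_lt (by simp)
  have h1 : (Nat.card {f : Fin 3 → Fin 2 //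
      ∀ i j, ¬ (⊤ : SimpleGraph (Fin 2)).Adj (f i) (f j)} : ℝ) / (2 : ℝ) ^ 3 = 1 / 4 := by
    rw [h2]; norm_num
  refine ⟨h1, hfree, ?_⟩
  have hmem : (1/4 : ℝ) ∈ {p : ℝ | ∃ (V : Type) (_ : Fintype V) (_ : Nonempty V)
      (G : SimpleGraph V), G.CliqueFree 3 ∧
      p = (Nat.card {f : Fin 3 → V // ∀ i j, ¬ G.Adj (f i) (f j)} : ℝ) /
            (Nat.card V : ℝ) ^ 3} := by
    refine ⟨Fin 2, inferInstance, inferInstance, ⊤, hfree, ?_⟩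
    rw [Nat.card_eq_fintype_card (α := Fin 2), Fintype.card_fin]
    rw [← h1]; norm_num
  have hlb : ∀ p ∈ {p : ℝ | ∃ (V : Type) (_ : Fintype V) (_ : Nonempty V)
      (G : SimpleGraph V), G.CliqueFree 3 ∧
      p = (Nat.card {f : Fin 3 → V // ∀ i j, ¬ G.Adj (f i) (f j)} : ℝ) /
            (Nat.card V : ℝ) ^ 3}, (1/4 : ℝ) ≤ p := by
    rintro p ⟨V, hF, hN, G, hG, rfl⟩
    exact lower_bound V G hG
  exact le_antisymm (csInf_le ⟨1/4, hlb⟩ hmem) (le_csInf ⟨1/4, hmem⟩ hlb)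
end

section
/- Define N(s,t) for integers s ≥ 1, t ≥ 2 by N(s,t) = 1 if s = 1 or t = 2, and N(s,t) = min over x ∈ [0,1] of max(x^s · N(s,t-1), (1-x)^{s-1} · N(s-1,t)) otherwise. Then for every y ∈ [0,1], N(s,t) ≥ (1-y)^{s(s-1)/2} · y^{s(t-2)}. -/
/-- The function `N(s,t)`: `N(s,t) = 1` if `s ≤ 1` or `t ≤ 2`, and otherwise
`N(s,t) = min_{x ∈ [0,1]} max (x^s N(s,t-1)) ((1-x)^{s-1} N(s-1,t))`
(the minimum written as an infimum, which is attained by continuity). -/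
noncomputable def N : ℕ → ℕ → ℝ
  | 0, _ => 1
  | 1, _ => 1
  | _ + 2, 0 => 1
  | _ + 2, 1 => 1
  | _ + 2, 2 => 1
  | s + 2, t + 3 => sInf {y : ℝ | ∃ x ∈ Set.Icc (0 : ℝ) 1,
      y = max (x ^ (s + 2) * N (s + 2) (t + 2)) ((1 - x) ^ (s + 1) * N (s + 1) (t + 3))}
  termination_by s t => (s, t)

lemma key : ∀ n s t, s + t ≤ n → 1 ≤ s → 2 ≤ t → ∀ y : ℝ, y ∈ Set.Icc (0:ℝ) 1 →
    (1 - y) ^ (s * (s - 1) / 2) * y ^ (s * (t - 2)) ≤ N s t := by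
  intro n
  induction n with
  | zero => intro s t h hs ht; omega
  | succ n ih =>
    intro s t h hs ht y hy
    obtain ⟨hy0, hy1⟩ := hy
    have h1y0 : (0:ℝ) ≤ 1 - y := by linarith
    have h1y1 : 1 - y ≤ 1 := by linarith
    match s, hs, t, ht with
    | 1, _, t, ht =>
      have : N 1 t = 1 := by simp [N]
      rw [this]
      simp only [Nat.sub_self, one_mul, Nat.zero_div, pow_zero]
      calc y ^ (t - 2) ≤ 1 ^ (t - 2) := pow_le_pow_left₀ hy0 hy1 _
        _ = 1 := one_pow _
    | S + 2, _, 2, _ =>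
      have : N (S + 2) 2 = 1 := by simp [N]
      rw [this]
      simp only [Nat.sub_self, mul_zero, pow_zero, mul_one]
      calc (1 - y) ^ ((S+2) * (S+2-1) / 2) ≤ 1 ^ ((S+2) * (S+2-1) / 2) :=
            pow_le_pow_left₀ h1y0 h1y1 _
        _ = 1 := one_pow _
    | S + 2, _, T + 3, _ =>
      rw [N]
      -- nonnegativity of the two sub-values via the IH
      have key1 := ih (S + 2) (T + 2) (by omega) (by omega) (by omega) y ⟨hy0, hy1⟩
      have key2 := ih (S + 1) (T + 3) (by omega) (by omega) (by omega) y ⟨hy0, hy1⟩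
      simp only [show (S+2) - 1 = S + 1 from rfl, show (T+2) - 2 = T from rfl,
        show (S+1) - 1 = S from rfl, show (T+3) - 2 = T + 1 from rfl] at key1 key2 ⊢
      have hN1 : (0:ℝ) ≤ N (S + 2) (T + 2) := le_trans (by positivity) key1
      have hN2 : (0:ℝ) ≤ N (S + 1) (T + 3) := le_trans (by positivity) key2
      apply le_csInf
      · exact ⟨_, 0, ⟨le_refl 0, zero_le_one⟩, rfl⟩
      · rintro b ⟨x, ⟨hx0, hx1⟩, rfl⟩
        set c := (1 - y) ^ ((S+2) * (S+1) / 2) * y ^ ((S+2) * (T+1)) with hc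
        rcases le_total y x with hxy | hxy
        · refine le_trans ?_ (le_max_left _ _)
          have step1 : c ≤ y ^ (S+2) * N (S + 2) (T + 2) := by
            calc c = y ^ (S+2) * ((1 - y) ^ ((S+2)*(S+1)/2) * y ^ ((S+2)*T)) := by
                  rw [hc]; rw [show (S+2)*(T+1) = (S+2) + (S+2)*T by ring, pow_add]; ring
              _ ≤ y ^ (S+2) * N (S + 2) (T + 2) := by
                  apply mul_le_mul_of_nonneg_left key1 (by positivity)
          refine le_trans step1 ?_
          exact mul_le_mul_of_nonneg_right (pow_le_pow_left₀ hy0 hxy _) hN1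
        · refine le_trans ?_ (le_max_right _ _)
          have hes : (S+1)*S/2 + (S+1) = (S+2)*(S+1)/2 := by
            have h2 : 2 * ((S+1)*S/2) = (S+1)*S := by
              obtain ⟨k, hk⟩ := Nat.even_mul_succ_self S
              have he : (S+1)*S = S*(S+1) := by ring
              omega
            have h3 : (S+2)*(S+1) = (S+1)*S + 2*(S+1) := by ring
            omega
          have step1 : c ≤ (1 - y) ^ (S+1) * N (S + 1) (T + 3) := by
            calc c ≤ (1 - y) ^ ((S+2)*(S+1)/2) * y ^ ((S+1)*(T+1)) := by
                  apply mul_le_mul_of_nonneg_left _ (by positivity)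
                  exact pow_le_pow_of_le_one hy0 hy1 (by nlinarith)
              _ = (1 - y) ^ (S+1) * ((1 - y) ^ ((S+1)*S/2) * y ^ ((S+1)*(T+1))) := by
                  rw [← hes, pow_add]; ring
              _ ≤ (1 - y) ^ (S+1) * N (S + 1) (T + 3) := by
                  apply mul_le_mul_of_nonneg_left key2 (by positivity)
          refine le_trans step1 ?_
          refine mul_le_mul_of_nonneg_right (pow_le_pow_left₀ h1y0 (by linarith) _) hN2


/-- For integers `s ≥ 1`, `t ≥ 2` and every `y ∈ [0,1]`,
`N(s,t) ≥ (1-y)^{s(s-1)/2} · y^{s(t-2)}`. -/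
theorem stmt_9 (s t : ℕ) (hs : 1 ≤ s) (ht : 2 ≤ t) (y : ℝ) (hy : y ∈ Set.Icc (0 : ℝ) 1) :
    (1 - y) ^ (s * (s - 1) / 2) * y ^ (s * (t - 2)) ≤ N s t :=
  key (s + t) s t le_rfl hs ht y hy
end

section
/- With P(s,t) as above, P(s,t) ≥ min_{x∈[0,1]} max( x^s · P(s, t-1), (1-x)^{s-1} · P(s-1, t) ). -/
/-- `P s t` is the infimum, over all finite nonempty graphs `G` with no clique of size
`t`, of the probability that `s` independently uniformly chosen vertices of `G` form an
independent set. -/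
noncomputable def P (s t : ℕ) : ℝ :=
  sInf {p : ℝ | ∃ (V : Type) (_ : Fintype V) (_ : Nonempty V) (G : SimpleGraph V),
    G.CliqueFree t ∧
    p = (Nat.card {f : Fin s → V // ∀ i j, ¬ G.Adj (f i) (f j)} : ℝ) /
          (Nat.card V : ℝ) ^ s}


namespace Aux

def Pset (s t : ℕ) : Set ℝ :=
  {p : ℝ | ∃ (V : Type) (_ : Fintype V) (_ : Nonempty V) (G : SimpleGraph V),
    G.CliqueFree t ∧
    p = (Nat.card {f : Fin s → V // ∀ i j, ¬ G.Adj (f i) (f j)} : ℝ) /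
          (Nat.card V : ℝ) ^ s}

lemma P_eq (s t : ℕ) : P s t = sInf (Pset s t) := rfl

lemma Pset_nonneg {s t : ℕ} {p : ℝ} (hp : p ∈ Pset s t) : 0 ≤ p := by
  obtain ⟨V, _, _, G, _, rfl⟩ := hp
  positivity

lemma Pset_bdd (s t : ℕ) : BddBelow (Pset s t) := ⟨0, fun p hp => Pset_nonneg hp⟩

lemma P_nonneg (s t : ℕ) : 0 ≤ P s t :=
  Real.sInf_nonneg fun _ hp => Pset_nonneg hp

lemma Pset_le_one {s t : ℕ} {p : ℝ} (hp : p ∈ Pset s t) : p ≤ 1 := by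
  obtain ⟨V, _, _, G, _, rfl⟩ := hp
  have h1 : Nat.card {f : Fin s → V // ∀ i j, ¬ G.Adj (f i) (f j)} ≤ Nat.card V ^ s := by
    calc Nat.card {f : Fin s → V // ∀ i j, ¬ G.Adj (f i) (f j)}
        ≤ Nat.card (Fin s → V) := Nat.card_le_card_of_injective _ Subtype.coe_injective
      _ = Nat.card V ^ s := by simp [Nat.card_fun]
  have h2 : (0:ℝ) < (Nat.card V : ℝ) ^ s := by
    have : 0 < Nat.card V := Nat.card_pos
    positivity
  rw [div_le_one h2]
  exact_mod_cast le_trans h1 (le_of_eq (by push_cast; ring))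

lemma P_le {s t : ℕ} {p : ℝ} (hp : p ∈ Pset s t) : P s t ≤ p :=
  csInf_le (Pset_bdd s t) hp

lemma P_le_one (s t : ℕ) : P s t ≤ 1 := by
  rcases Set.eq_empty_or_nonempty (Pset s t) with h | ⟨p, hp⟩
  · rw [P_eq, h, Real.sInf_empty]; norm_num
  · exact le_trans (P_le hp) (Pset_le_one hp)

lemma P_eq_zero (s : ℕ) {t : ℕ} (ht : t ≤ 1) : P s t = 0 := by
  rw [P_eq]
  convert Real.sInf_empty
  rw [Set.eq_empty_iff_forall_notMem]
  rintro p ⟨V, _, _, G, hG, -⟩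
  have : G.CliqueFree 1 := hG.mono ht
  obtain ⟨v⟩ := ‹Nonempty V›
  exact this {v} ⟨by simp, by simp⟩

lemma mem_Pset {V : Type} [Fintype V] [Nonempty V] (G : SimpleGraph V) {t : ℕ}
    (h : G.CliqueFree t) (s : ℕ) :
    ((Nat.card {f : Fin s → V // ∀ i j, ¬ G.Adj (f i) (f j)} : ℝ) / (Nat.card V : ℝ) ^ s)
      ∈ Pset s t := ⟨V, ‹_›, ‹_›, G, h, rfl⟩

lemma claim1 {V : Type} [Fintype V] [Nonempty V] (G : SimpleGraph V) [DecidableRel G.Adj]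
    {t : ℕ} (hG : G.CliqueFree (t+2)) (s : ℕ) (v₀ : V) (hd : 0 < G.degree v₀) :
    ((G.degree v₀ : ℝ)/(Fintype.card V)) ^ s * P s (t+1)
      ≤ (Nat.card {f : Fin s → V // ∀ i j, ¬ G.Adj (f i) (f j)} : ℝ)
          / (Fintype.card V : ℝ) ^ s := by
  classical
  set W : Set V := G.neighborSet v₀ with hW
  have hWcard : Nat.card W = G.degree v₀ := by
    rw [Nat.card_eq_fintype_card]; exact G.card_neighborSet_eq_degree v₀
  haveI hWne : Nonempty W := by
    rw [← Fintype.card_pos_iff]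
    rw [Nat.card_eq_fintype_card] at hWcard
    omega
  have hG' : (G.induce W).CliqueFree (t+1) := by
    intro K hK
    have hK' : G.IsNClique (t+1) (K.map (Function.Embedding.subtype _)) := by
      constructor
      · rintro a ha b hb hab
        simp only [Finset.coe_map, Set.mem_image, Function.Embedding.coe_subtype,
          Finset.mem_coe] at ha hb
        obtain ⟨a', ha', rfl⟩ := ha
        obtain ⟨b', hb', rfl⟩ := hb
        exact hK.1 ha' hb' (fun h => hab (by rw [h]))
      · rw [Finset.card_map]; exact hK.2
    have hins : G.IsNClique (t+2) (insert v₀ (K.map (Function.Embedding.subtype _))) :=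
      hK'.insert (fun b hb => by
        simp only [Finset.mem_map, Function.Embedding.coe_subtype] at hb
        obtain ⟨b', hb', rfl⟩ := hb
        exact b'.2)
    exact hG _ hins
  have hP := P_le (mem_Pset (G.induce W) hG' s)
  have hinj : Nat.card {g : Fin s → W // ∀ i j, ¬ (G.induce W).Adj (g i) (g j)}
      ≤ Nat.card {f : Fin s → V // ∀ i j, ¬ G.Adj (f i) (f j)} := by
    apply Nat.card_le_card_of_injective
      (fun g => (⟨fun i => (g.1 i : V), fun i j h => g.2 i j h⟩ :
        {f : Fin s → V // ∀ i j, ¬ G.Adj (f i) (f j)}))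
    intro g₁ g₂ h
    ext i
    exact congrFun (congrArg Subtype.val h) i
  rw [hWcard] at hP
  have hd' : (0:ℝ) < (G.degree v₀ : ℝ) := by exact_mod_cast hd
  have hn : (0:ℝ) < (Fintype.card V : ℝ) := by exact_mod_cast Fintype.card_pos
  calc ((G.degree v₀ : ℝ)/(Fintype.card V)) ^ s * P s (t+1)
      ≤ ((G.degree v₀ : ℝ)/(Fintype.card V)) ^ s *
        ((Nat.card {g : Fin s → W // ∀ i j, ¬ (G.induce W).Adj (g i) (g j)} : ℝ)
          / (G.degree v₀ : ℝ) ^ s) := by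
        apply mul_le_mul_of_nonneg_left hP (by positivity)
    _ = (Nat.card {g : Fin s → W // ∀ i j, ¬ (G.induce W).Adj (g i) (g j)} : ℝ)
          / (Fintype.card V : ℝ) ^ s := by
        field_simp
        have hnn : (Fintype.card V:ℝ)^s * (Fintype.card V:ℝ)⁻¹^s = 1 := by
          rw [← mul_pow, mul_inv_cancel₀ hn.ne', one_pow]
        linear_combination ((G.degree v₀ : ℝ) ^ s * (Nat.card {g : Fin s → W // ∀ i j, ¬ (G.induce W).Adj (g i) (g j)} : ℝ)) * hnn
    _ ≤ (Nat.card {f : Fin s → V // ∀ i j, ¬ G.Adj (f i) (f j)} : ℝ)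
          / (Fintype.card V : ℝ) ^ s := by
        apply div_le_div_of_nonneg_right ?_ (by positivity)
        exact_mod_cast hinj

lemma claim2 {V : Type} [Fintype V] [Nonempty V] (G : SimpleGraph V) [DecidableRel G.Adj]
    {t : ℕ} (hG : G.CliqueFree t) (s : ℕ) (D : ℕ) (hD : ∀ v, G.degree v ≤ D)
    (hDn : D ≤ Fintype.card V) :
    (1 - (D:ℝ)/(Fintype.card V)) ^ s * P s t
      ≤ (Nat.card {f : Fin (s+1) → V // ∀ i j, ¬ G.Adj (f i) (f j)} : ℝ)
          / (Fintype.card V : ℝ) ^ (s+1) := by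
  classical
  have hn0 : 0 < Fintype.card V := Fintype.card_pos
  set n : ℕ := Fintype.card V with hn
  let Wv : V → Set V := fun v => {u | ¬ G.Adj v u}
  have hmem : ∀ v, v ∈ Wv v := fun v => G.irrefl
  haveI hne : ∀ v, Nonempty (Wv v) := fun v => ⟨⟨v, hmem v⟩⟩
  have hcard : ∀ v, n - D ≤ Nat.card (Wv v) := by
    intro v
    have h1 : Nat.card (Wv v) = n - G.degree v := by
      rw [Nat.card_eq_fintype_card]
      have : Fintype.card (Wv v) = Fintype.card {u // ¬ G.Adj v u} :=
        Fintype.card_congr (Equiv.refl _)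
      rw [this, Fintype.card_subtype_compl]
      congr 1
      rw [← G.card_neighborSet_eq_degree v]
      exact Fintype.card_congr (Equiv.refl _)
    rw [h1]
    have := hD v
    omega
  -- each induced graph is clique-free and nonempty
  have hfree : ∀ v, (G.induce (Wv v)).CliqueFree t :=
    fun v => hG.comap ⟨(SimpleGraph.Embedding.induce (Wv v)).toCopy⟩
  have hPle : ∀ v, P s t * (Nat.card (Wv v) : ℝ) ^ s ≤
      (Nat.card {g : Fin s → Wv v // ∀ i j, ¬ (G.induce (Wv v)).Adj (g i) (g j)} : ℝ) := by
    intro v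
    have hc : (0:ℝ) < (Nat.card (Wv v) : ℝ) := by
      have : 0 < Nat.card (Wv v) := Nat.card_pos
      exact_mod_cast this
    have := P_le (mem_Pset (G.induce (Wv v)) (hfree v) s)
    rw [le_div_iff₀ (by positivity)] at this
    exact this
  -- injection from sigma type
  have hinj : Nat.card (Σ v : V, {g : Fin s → Wv v // ∀ i j, ¬ (G.induce (Wv v)).Adj (g i) (g j)})
      ≤ Nat.card {f : Fin (s+1) → V // ∀ i j, ¬ G.Adj (f i) (f j)} := by
    apply Nat.card_le_card_of_injective
      (fun p => (⟨Fin.cons p.1 (fun i => (p.2.1 i : V)), by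
        intro i j
        refine Fin.cases ?_ ?_ i <;> [skip; intro ii] <;>
          refine Fin.cases ?_ ?_ j <;> [skip; intro jj; skip; intro jj] <;>
          simp only [Fin.cons_zero, Fin.cons_succ]
        · exact G.irrefl
        · exact (p.2.1 jj).2
        · exact fun h => (p.2.1 ii).2 h.symm
        · exact p.2.2 ii jj⟩ :
        {f : Fin (s+1) → V // ∀ i j, ¬ G.Adj (f i) (f j)}))
    rintro ⟨v, g⟩ ⟨w, gq⟩ h
    obtain rfl : v = w := by simpa using congrFun (congrArg Subtype.val h) 0
    suffices hg : g = gq by rw [hg]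
    ext i
    have := congrFun (congrArg Subtype.val h) i.succ
    simpa using this
  have hsig : Nat.card (Σ v : V, {g : Fin s → Wv v // ∀ i j, ¬ (G.induce (Wv v)).Adj (g i) (g j)})
      = ∑ v : V, Nat.card {g : Fin s → Wv v // ∀ i j, ¬ (G.induce (Wv v)).Adj (g i) (g j)} := by
    simp [Nat.card_eq_fintype_card]
  set r : ℝ := ((n - D : ℕ) : ℝ) with hr
  have hr0 : 0 ≤ r := by positivity
  have hsumineq : (n:ℝ) * (P s t * r ^ s)
      ≤ (Nat.card {f : Fin (s+1) → V // ∀ i j, ¬ G.Adj (f i) (f j)} : ℝ) := by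
    have h1 : ∀ v : V, P s t * r ^ s ≤
        (Nat.card {g : Fin s → Wv v // ∀ i j, ¬ (G.induce (Wv v)).Adj (g i) (g j)} : ℝ) := by
      intro v
      refine le_trans ?_ (hPle v)
      apply mul_le_mul_of_nonneg_left ?_ (P_nonneg s t)
      apply pow_le_pow_left₀ hr0
      rw [hr]
      exact_mod_cast hcard v
    calc (n:ℝ) * (P s t * r ^ s) = ∑ _v : V, (P s t * r ^ s) := by
          rw [Finset.sum_const, Finset.card_univ, nsmul_eq_mul]
      _ ≤ ∑ v : V, (Nat.card {g : Fin s → Wv v // ∀ i j, ¬ (G.induce (Wv v)).Adj (g i) (g j)} : ℝ) :=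
          Finset.sum_le_sum (fun v _ => h1 v)
      _ = ((∑ v : V, Nat.card {g : Fin s → Wv v // ∀ i j, ¬ (G.induce (Wv v)).Adj (g i) (g j)} : ℕ) : ℝ) := by
          push_cast; rfl
      _ ≤ _ := by rw [← hsig]; exact_mod_cast hinj
  have hnR : (0:ℝ) < (n:ℝ) := by exact_mod_cast hn0
  have heq : (1 - (D:ℝ)/(n:ℝ)) ^ s * P s t = (n:ℝ) * (P s t * r ^ s) / (n:ℝ) ^ (s+1) := by
    have hrn : r = (n:ℝ) - (D:ℝ) := by rw [hr]; push_cast [Nat.cast_sub hDn]; ring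
    rw [hrn]
    have : (1 - (D:ℝ)/(n:ℝ)) = ((n:ℝ) - (D:ℝ))/(n:ℝ) := by field_simp
    rw [this, div_pow, pow_succ]
    field_simp
  rw [heq]
  exact div_le_div_of_nonneg_right hsumineq (by positivity) |>.trans_eq rfl

lemma key {V : Type} [Fintype V] [Nonempty V] (G : SimpleGraph V) {t : ℕ}
    (hG : G.CliqueFree t) (s : ℕ) :
    ∃ x ∈ Set.Icc (0:ℝ) 1,
      max (x ^ s * P s (t-1)) ((1-x) ^ (s-1) * P (s-1) t)
        ≤ (Nat.card {f : Fin s → V // ∀ i j, ¬ G.Adj (f i) (f j)} : ℝ)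
            / (Nat.card V : ℝ) ^ s := by
  classical
  obtain ⟨v⟩ := ‹Nonempty V›
  rcases t with _ | _ | t
  · exact absurd (hG ∅ ⟨by simp, by simp⟩) (by simp)
  · exact absurd (hG {v} ⟨by simp, by simp⟩) (by simp)
  rw [Nat.card_eq_fintype_card (α := V)]
  rcases s with _ | s
  · refine ⟨0, by norm_num, ?_⟩
    have hc : Nat.card {f : Fin 0 → V // ∀ i j, ¬ G.Adj (f i) (f j)} = 1 := by
      rw [Nat.card_congr (Equiv.subtypeUnivEquiv (fun f i j => (i : Fin 0).elim0)),
        Nat.card_eq_fintype_card]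
      simp
    rw [hc]
    simp only [pow_zero, one_mul, Nat.cast_one, Nat.zero_sub, sub_zero, one_pow]
    rw [one_div_one]
    exact max_le (P_le_one _ _) (P_le_one _ _)
  · set n := Fintype.card V with hn
    set D := Finset.univ.sup (fun v => G.degree v) with hD
    have hDle : ∀ v, G.degree v ≤ D := fun v => Finset.le_sup (f := fun v => G.degree v) (Finset.mem_univ v)
    obtain ⟨v₀, -, hv₀⟩ :=
      Finset.exists_mem_eq_sup Finset.univ Finset.univ_nonempty (fun v => G.degree v)
    have hDlt : D < n := by rw [hD, hv₀]; exact G.degree_lt_card_verts v₀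
    have hn0 : 0 < n := Fintype.card_pos
    have hnR : (0:ℝ) < (n:ℝ) := by exact_mod_cast hn0
    refine ⟨(D:ℝ)/(n:ℝ), ⟨by positivity, ?_⟩, ?_⟩
    · rw [div_le_one hnR]; exact_mod_cast hDlt.le
    apply max_le
    · -- Claim 1
      rcases Nat.eq_zero_or_pos D with h0 | hpos
      · rw [h0]
        simp only [Nat.cast_zero, zero_div, zero_pow (Nat.succ_ne_zero s), zero_mul]
        positivity
      · have hdeg : 0 < G.degree v₀ := by rw [← hv₀]; exact hpos
        have h1 := claim1 G hG (s+1) v₀ hdeg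
        rw [← hv₀] at h1
        rw [hD, hn]
        simpa using h1
    · -- Claim 2
      have h2 := claim2 G hG s D hDle hDlt.le
      rw [hD, hn]
      simpa using h2

end Aux

open Aux

/-- Neighborhood recursion:
`P(s,t) ≥ min_{x ∈ [0,1]} max (x^s · P(s,t-1)) ((1-x)^{s-1} · P(s-1,t))`,
the minimum written as an infimum. -/
theorem stmt_14 (s t : ℕ) :
    sInf {y : ℝ | ∃ x ∈ Set.Icc (0 : ℝ) 1,
        y = max (x ^ s * P s (t - 1)) ((1 - x) ^ (s - 1) * P (s - 1) t)} ≤ P s t := by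
  classical
  set S := {y : ℝ | ∃ x ∈ Set.Icc (0 : ℝ) 1,
      y = max (x ^ s * P s (t - 1)) ((1 - x) ^ (s - 1) * P (s - 1) t)} with hS
  have hSbdd : BddBelow S := by
    refine ⟨0, ?_⟩
    rintro y ⟨x, hx, rfl⟩
    exact le_trans (mul_nonneg (pow_nonneg hx.1 s) (P_nonneg s (t-1))) (le_max_left _ _)
  rcases Set.eq_empty_or_nonempty (Pset s t) with hT | hTne
  · have hP0 : P s t = 0 := by rw [P_eq, hT, Real.sInf_empty]
    have ht : t ≤ 1 := by
      by_contra h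
      push_neg at h
      have hmem := mem_Pset (⊥ : SimpleGraph Unit) (SimpleGraph.cliqueFree_bot h) s
      rw [hT] at hmem
      exact hmem
    have h1 : P s (t - 1) = 0 := P_eq_zero s (by omega)
    have h2 : P (s - 1) t = 0 := P_eq_zero (s-1) ht
    have h0S : (0:ℝ) ∈ S := ⟨0, ⟨le_refl _, zero_le_one⟩, by rw [h1, h2]; simp⟩
    rw [hP0]
    exact csInf_le hSbdd h0S
  · refine le_csInf hTne ?_
    rintro p ⟨V, _, _, G, hG, rfl⟩
    obtain ⟨x, hx, hle⟩ := key G hG s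
    exact le_trans (csInf_le hSbdd ⟨x, hx, rfl⟩) hle
end

section
/- With P and N defined as above, P(s,t) ≥ N(s,t) for all s ≥ 1, t ≥ 2. -/
section auxN

private lemma N_one_left (t : ℕ) : N 1 t = 1 := by simp [N]

private lemma N_two_right (s : ℕ) : N s 2 = 1 := by
  rcases s with _ | _ | s <;> simp [N]

private lemma N_succ (s t : ℕ) : N (s+2) (t+3) = sInf {y : ℝ | ∃ x ∈ Set.Icc (0:ℝ) 1,
    y = max (x ^ (s+2) * N (s+2) (t+2)) ((1 - x) ^ (s+1) * N (s+1) (t+3))} := by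
  rw [N]

private lemma N_nonneg : ∀ s t, 0 ≤ N s t := by
  intro s
  induction s using Nat.strong_induction_on with
  | _ s ihs =>
  intro t
  induction t using Nat.strong_induction_on with
  | _ t iht =>
  rcases s with _ | _ | s
  · simp [N]
  · simp [N]
  rcases t with _ | _ | _ | t
  · simp [N]
  · simp [N]
  · simp [N]
  rw [N_succ]
  apply le_csInf
  · exact ⟨_, 0, by norm_num, rfl⟩
  · rintro y ⟨x, hx, rfl⟩
    exact le_max_of_le_left (mul_nonneg (pow_nonneg hx.1 _) (iht (t+2) (by omega)))

private lemma N_le (s t : ℕ) (x : ℝ) (hx : x ∈ Set.Icc (0:ℝ) 1) :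
    N (s+2) (t+3) ≤ max (x ^ (s+2) * N (s+2) (t+2)) ((1-x) ^ (s+1) * N (s+1) (t+3)) := by
  rw [N_succ]
  apply csInf_le
  · refine ⟨0, ?_⟩
    rintro y ⟨z, hz, rfl⟩
    exact le_max_of_le_left (mul_nonneg (pow_nonneg hz.1 _) (N_nonneg _ _))
  · exact ⟨x, hx, rfl⟩

end auxN

section auxCount

open SimpleGraph

variable {V : Type} [Fintype V]

private lemma nat_card_sigma {ι : Type} [Fintype ι] (β : ι → Type) [∀ i, Finite (β i)] :
    Nat.card (Σ i, β i) = ∑ i, Nat.card (β i) := by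
  letI : ∀ i, Fintype (β i) := fun i => Fintype.ofFinite _
  simp [Nat.card_eq_fintype_card, Fintype.card_sigma]

private def fiberEquiv (G : SimpleGraph V) (v : V) (s : ℕ) :
    {x : {f : Fin (s+1) → V // ∀ i j, ¬ G.Adj (f i) (f j)} // x.1 0 = v} ≃
    {g : Fin s → ↥{u | ¬ G.Adj v u} // ∀ i j,
      ¬ (SimpleGraph.induce {u | ¬ G.Adj v u} G).Adj (g i) (g j)} where
  toFun x := ⟨fun i => ⟨x.1.1 i.succ, by
      have h := x.1.2 0 i.succ
      rw [x.2] at h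
      exact h⟩,
    fun i j h => x.1.2 i.succ j.succ h⟩
  invFun g := ⟨⟨Fin.cons v fun i => (g.1 i).1, by
      intro i j
      refine Fin.cases ?_ (fun i' => ?_) i
      · refine Fin.cases ?_ (fun j' => ?_) j
        · simp
        · simp only [Fin.cons_zero, Fin.cons_succ]
          exact (g.1 j').2
      · refine Fin.cases ?_ (fun j' => ?_) j
        · simp only [Fin.cons_zero, Fin.cons_succ]
          exact fun h => (g.1 i').2 h.symm
        · simp only [Fin.cons_succ]
          exact g.2 i' j'⟩, by simp⟩
  left_inv x := by
    apply Subtype.ext; apply Subtype.ext; funext i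
    refine Fin.cases ?_ (fun i' => ?_) i
    · simpa using x.2.symm
    · simp
  right_inv g := by
    apply Subtype.ext; funext i; apply Subtype.ext
    simp

private lemma card_split (G : SimpleGraph V) (s : ℕ) :
    Nat.card {f : Fin (s+1) → V // ∀ i j, ¬ G.Adj (f i) (f j)} =
    ∑ v : V, Nat.card {g : Fin s → ↥{u | ¬ G.Adj v u} // ∀ i j,
      ¬ (SimpleGraph.induce {u | ¬ G.Adj v u} G).Adj (g i) (g j)} := by
  rw [Nat.card_congr (Equiv.sigmaFiberEquiv
    (fun x : {f : Fin (s+1) → V // ∀ i j, ¬ G.Adj (f i) (f j)} => x.1 0)).symm]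
  rw [nat_card_sigma]
  exact Finset.sum_congr rfl fun v _ => Nat.card_congr (fiberEquiv G v s)

private lemma card_restrict_le (G : SimpleGraph V) (W : Set V) (s : ℕ) :
    Nat.card {g : Fin s → ↥W // ∀ i j, ¬ (SimpleGraph.induce W G).Adj (g i) (g j)} ≤
    Nat.card {f : Fin s → V // ∀ i j, ¬ G.Adj (f i) (f j)} := by
  apply Nat.card_le_card_of_injective
    (fun g => ⟨fun i => (g.1 i).1, fun i j h => g.2 i j h⟩)
  rintro ⟨g, hg⟩ ⟨g', hg'⟩ h
  apply Subtype.ext; funext i; apply Subtype.ext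
  exact congrFun (congrArg Subtype.val h) i

private lemma card_one (G : SimpleGraph V) :
    Nat.card {f : Fin 1 → V // ∀ i j, ¬ G.Adj (f i) (f j)} = Nat.card V := by
  apply Nat.card_congr
  exact { toFun := fun f => f.1 0
          invFun := fun v => ⟨fun _ => v, fun i j h => G.ne_of_adj h rfl⟩
          left_inv := fun f => by
            apply Subtype.ext; funext i
            have hi : i = 0 := Subsingleton.elim _ _
            rw [hi]
          right_inv := fun v => rfl }

private lemma card_bot (s : ℕ) :
    Nat.card {f : Fin s → V // ∀ i j, ¬ (⊥ : SimpleGraph V).Adj (f i) (f j)} =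
      Nat.card V ^ s := by
  rw [Nat.card_congr (Equiv.subtypeUnivEquiv (by simp))]
  simp [Nat.card_eq_fintype_card, Fintype.card_fun]

private lemma cliqueFree_nbhd {V : Type} (G : SimpleGraph V) {t : ℕ}
    (h : G.CliqueFree (t+1)) (v : V) :
    (SimpleGraph.induce (G.neighborSet v) G).CliqueFree t := by
  classical
  intro S hS
  refine h (insert v (S.map ⟨Subtype.val, Subtype.val_injective⟩)) ?_
  have hmap : G.IsNClique t (S.map ⟨Subtype.val, Subtype.val_injective⟩) := by
    constructor
    · rintro a ha b hb hab
      simp only [Finset.coe_map, Set.mem_image, Finset.mem_coe] at ha hb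
      obtain ⟨a', ha', rfl⟩ := ha; obtain ⟨b', hb', rfl⟩ := hb
      exact hS.1 ha' hb' (fun hc => hab (congrArg _ hc))
    · rw [Finset.card_map]; exact hS.2
  refine hmap.insert ?_
  intro b hb
  simp only [Finset.mem_map] at hb
  obtain ⟨b', hb', rfl⟩ := hb
  exact b'.2

private lemma key_s16 : ∀ (k s t : ℕ) (V : Type) [Fintype V] [Nonempty V] (G : SimpleGraph V),
    s + t ≤ k → 1 ≤ s → 2 ≤ t → G.CliqueFree t →
    N s t * (Nat.card V : ℝ) ^ s ≤
      (Nat.card {f : Fin s → V // ∀ i j, ¬ G.Adj (f i) (f j)} : ℝ) := by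
  intro k
  induction k with
  | zero => intro s t V _ _ G hk hs ht _; omega
  | succ k ih =>
    intro s t V _ _ G hk hs ht hG
    rcases Nat.lt_or_ge s 2 with hs1 | hs2
    · obtain rfl : s = 1 := by omega
      rw [card_one, N_one_left, one_mul, pow_one]
    rcases Nat.lt_or_ge t 3 with ht2 | ht3
    · obtain rfl : t = 2 := by omega
      rw [SimpleGraph.cliqueFree_two] at hG
      subst hG
      rw [card_bot, N_two_right, one_mul]
      push_cast
      exact le_refl _
    obtain ⟨s', rfl⟩ : ∃ s', s = s' + 2 := ⟨s - 2, by omega⟩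
    obtain ⟨t', rfl⟩ : ∃ t', t = t' + 3 := ⟨t - 3, by omega⟩
    classical
    have hn1 : 1 ≤ Nat.card V := Nat.card_pos
    have hnR : (0:ℝ) < (Nat.card V : ℝ) := by exact_mod_cast hn1
    haveI hWne : ∀ v : V, Nonempty ↥{u | ¬ G.Adj v u} :=
      fun v => ⟨⟨v, fun h => G.ne_of_adj h rfl⟩⟩
    obtain ⟨v₀, -, hv₀⟩ := Finset.exists_min_image Finset.univ
      (fun v => Nat.card ↥{u | ¬ G.Adj v u}) ⟨Classical.arbitrary V, Finset.mem_univ _⟩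
    have hDpos : 1 ≤ Nat.card ↥{u | ¬ G.Adj v₀ u} := Nat.card_pos
    have hsum : Nat.card ↥(G.neighborSet v₀) + Nat.card ↥{u | ¬ G.Adj v₀ u} = Nat.card V := by
      have h2 : Nat.card ↥(G.neighborSet v₀) ≤ Nat.card V :=
        Nat.card_le_card_of_injective Subtype.val Subtype.val_injective
      have h1 : Nat.card ↥{u | ¬ G.Adj v₀ u}
          = Nat.card V - Nat.card ↥(G.neighborSet v₀) := by
        rw [Nat.card_eq_fintype_card, Nat.card_eq_fintype_card, Nat.card_eq_fintype_card]
        exact Fintype.card_subtype_compl _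
      omega
    have hsumR : (Nat.card ↥(G.neighborSet v₀) : ℝ) + (Nat.card ↥{u | ¬ G.Adj v₀ u} : ℝ)
        = (Nat.card V : ℝ) := by exact_mod_cast hsum
    have hx01 : (Nat.card ↥(G.neighborSet v₀) : ℝ) / (Nat.card V : ℝ) ∈ Set.Icc (0:ℝ) 1 := by
      constructor
      · positivity
      · rw [div_le_one hnR]
        have : Nat.card ↥(G.neighborSet v₀) ≤ Nat.card V := by omega
        exact_mod_cast this
    have hxn : (Nat.card ↥(G.neighborSet v₀) : ℝ) / (Nat.card V : ℝ) * (Nat.card V : ℝ)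
        = (Nat.card ↥(G.neighborSet v₀) : ℝ) := by field_simp
    have h1xn : (1 - (Nat.card ↥(G.neighborSet v₀) : ℝ) / (Nat.card V : ℝ)) * (Nat.card V : ℝ)
        = (Nat.card ↥{u | ¬ G.Adj v₀ u} : ℝ) := by
      rw [sub_mul, one_mul, div_mul_cancel₀ _ (ne_of_gt hnR)]
      linarith
    have hNle := N_le s' t' _ hx01
    refine le_trans (mul_le_mul_of_nonneg_right hNle (by positivity)) ?_
    rw [max_mul_of_nonneg _ _ (by positivity : (0:ℝ) ≤ (Nat.card V : ℝ) ^ (s'+2))]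
    apply max_le
    · -- neighborhood bound
      have he : ((Nat.card ↥(G.neighborSet v₀) : ℝ) / (Nat.card V : ℝ)) ^ (s'+2)
            * N (s'+2) (t'+2) * (Nat.card V : ℝ) ^ (s'+2)
          = N (s'+2) (t'+2) * (Nat.card ↥(G.neighborSet v₀) : ℝ) ^ (s'+2) := by
        rw [mul_comm _ (N (s'+2) (t'+2)), mul_assoc, ← mul_pow, hxn]
      rw [he]
      rcases Nat.eq_zero_or_pos (Nat.card ↥(G.neighborSet v₀)) with h0 | hpos
      · rw [h0]
        push_cast
        rw [zero_pow (by omega : s' + 2 ≠ 0), mul_zero]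
        positivity
      · haveI : Nonempty ↥(G.neighborSet v₀) := (Nat.card_pos_iff.mp hpos).1
        letI : Fintype ↥(G.neighborSet v₀) := Fintype.ofFinite _
        have hIH := ih (s'+2) (t'+2) ↥(G.neighborSet v₀)
          (SimpleGraph.induce (G.neighborSet v₀) G) (by omega) (by omega) (by omega)
          (cliqueFree_nbhd G hG v₀)
        refine hIH.trans ?_
        exact_mod_cast card_restrict_le G (G.neighborSet v₀) (s'+2)
    · -- non-neighborhood bound
      have he : (1 - (Nat.card ↥(G.neighborSet v₀) : ℝ) / (Nat.card V : ℝ)) ^ (s'+1)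
            * N (s'+1) (t'+3) * (Nat.card V : ℝ) ^ (s'+2)
          = N (s'+1) (t'+3) * ((Nat.card ↥{u | ¬ G.Adj v₀ u} : ℝ) ^ (s'+1) * (Nat.card V : ℝ)) := by
        calc (1 - (Nat.card ↥(G.neighborSet v₀) : ℝ) / (Nat.card V : ℝ)) ^ (s'+1)
            * N (s'+1) (t'+3) * (Nat.card V : ℝ) ^ (s'+2)
            = N (s'+1) (t'+3) *
              (((1 - (Nat.card ↥(G.neighborSet v₀) : ℝ) / (Nat.card V : ℝ)) * (Nat.card V : ℝ))
                ^ (s'+1) * (Nat.card V : ℝ)) := by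
              rw [mul_pow, pow_succ (Nat.card V : ℝ) (s'+1)]; ring
          _ = _ := by rw [h1xn]
      rw [he]
      have hsplit := card_split G (s'+1)
      rw [hsplit]
      push_cast
      have hterm : ∀ v : V, N (s'+1) (t'+3) * (Nat.card ↥{u | ¬ G.Adj v₀ u} : ℝ) ^ (s'+1) ≤
          (Nat.card {g : Fin (s'+1) → ↥{u | ¬ G.Adj v u} // ∀ i j,
            ¬ (SimpleGraph.induce {u | ¬ G.Adj v u} G).Adj (g i) (g j)} : ℝ) := by
        intro v
        haveI : Fintype ↥{u | ¬ G.Adj v u} := Fintype.ofFinite _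
        have hk1 : s' + 1 + (t' + 3) ≤ k := by clear hsplit; omega
        have hs1' : 1 ≤ s' + 1 := by clear hsplit; omega
        have ht1' : 2 ≤ t' + 3 := by clear hsplit; omega
        have hIH := ih (s'+1) (t'+3) ↥{u | ¬ G.Adj v u}
          (SimpleGraph.induce {u | ¬ G.Adj v u} G) hk1 hs1' ht1'
          (hG.comap (SimpleGraph.Embedding.induce _).isContained)
        refine le_trans ?_ hIH
        have hD' : (Nat.card ↥{u | ¬ G.Adj v₀ u} : ℝ) ^ (s'+1)
            ≤ (Nat.card ↥{u | ¬ G.Adj v u} : ℝ) ^ (s'+1) := by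
          have hmv := hv₀ v (Finset.mem_univ v)
          have : (Nat.card ↥{u | ¬ G.Adj v₀ u} : ℝ) ≤ (Nat.card ↥{u | ¬ G.Adj v u} : ℝ) := by
            exact_mod_cast hmv
          exact pow_le_pow_left₀ (by positivity) this _
        exact mul_le_mul_of_nonneg_left hD' (N_nonneg _ _)
      calc N (s'+1) (t'+3) * ((Nat.card ↥{u | ¬ G.Adj v₀ u} : ℝ) ^ (s'+1) * (Nat.card V : ℝ))
          = ∑ _v : V, N (s'+1) (t'+3) * (Nat.card ↥{u | ¬ G.Adj v₀ u} : ℝ) ^ (s'+1) := by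
            rw [Finset.sum_const, Finset.card_univ, nsmul_eq_mul, ← Nat.card_eq_fintype_card]
            ring
        _ ≤ _ := Finset.sum_le_sum fun v _ => hterm v

/-- `P(s,t) ≥ N(s,t)` for all `s ≥ 1`, `t ≥ 2`. -/
theorem stmt_16 (s t : ℕ) (hs : 1 ≤ s) (ht : 2 ≤ t) : N s t ≤ P s t := by
  apply le_csInf
  · exact ⟨_, Unit, inferInstance, inferInstance, ⊥, SimpleGraph.cliqueFree_bot ht, rfl⟩
  · rintro p ⟨V, hF, hNe, G, hG, rfl⟩
    letI := hF
    haveI := hNe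
    have hn : (0:ℝ) < (Nat.card V : ℝ) ^ s := by
      have h1 : 0 < Nat.card V := Nat.card_pos
      have : (0:ℝ) < (Nat.card V : ℝ) := by exact_mod_cast h1
      positivity
    rw [le_div_iff₀ hn]
    exact key_s16 (s + t) s t V G le_rfl hs ht hG

end auxCount
end
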